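/- arXiv:1607.05030 — 6 statements merged into one kernel-verified Lean document; each statement's English description precedes it below -/
import Mathlib

section
/- For all integers t, k, j' with 0 ≤ k ≤ min(j'-1, t-1-j'), the binomial identity C(t-1-2k, j'-k)·C(t-1-k, k-1) + C(t-1-2k, j'-1-k)·C(t-k, k) = C(t-1-k, t-j'-k)·C(j', k) holds, with the convention C(n, -1) = 0. -/
open Nat

private lemma aux_fact (a b m : ℕ) :
    (a+b+1).choose (a+1) * (m+a+b+2).choose m + (a+b+1).choose a * (m+a+b+3).choose (m+1)
    = (m+a+b+2).choose (b+1) * (m+a+2).choose (m+1) := by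
  have key : ((a+b+1).choose (a+1) * (m+a+b+2).choose m
      + (a+b+1).choose a * (m+a+b+3).choose (m+1) : ℚ)
      = ((m+a+b+2).choose (b+1) * (m+a+2).choose (m+1) : ℚ) := by
    have e1 : a+b+1-(a+1) = b := by omega
    have e2 : m+a+b+2-m = a+b+2 := by omega
    have e3 : a+b+1-a = b+1 := by omega
    have e4 : m+a+b+3-(m+1) = a+b+2 := by omega
    have e5 : m+a+b+2-(b+1) = m+a+1 := by omega
    have e6 : m+a+2-(m+1) = a+1 := by omega
    rw [Nat.cast_choose ℚ (by omega : a+1 ≤ a+b+1), e1,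
        Nat.cast_choose ℚ (by omega : m ≤ m+a+b+2), e2,
        Nat.cast_choose ℚ (by omega : a ≤ a+b+1), e3,
        Nat.cast_choose ℚ (by omega : m+1 ≤ m+a+b+3), e4,
        Nat.cast_choose ℚ (by omega : b+1 ≤ m+a+b+2), e5,
        Nat.cast_choose ℚ (by omega : m+1 ≤ m+a+2), e6]
    have f1 : ((a+b+2)! : ℚ) = (a+b+2) * (a+b+1)! := by
      rw [show a+b+2 = (a+b+1)+1 by omega, Nat.factorial_succ]; push_cast; ring
    have f2 : (((a:ℕ)+1)! : ℚ) = (a+1) * a ! := by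
      rw [Nat.factorial_succ]; push_cast; ring
    have f3 : (((b:ℕ)+1)! : ℚ) = (b+1) * b ! := by
      rw [Nat.factorial_succ]; push_cast; ring
    have f4 : (((m:ℕ)+1)! : ℚ) = (m+1) * m ! := by
      rw [Nat.factorial_succ]; push_cast; ring
    have f5 : ((m+a+b+3)! : ℚ) = (m+a+b+3) * (m+a+b+2)! := by
      rw [show m+a+b+3 = (m+a+b+2)+1 by omega, Nat.factorial_succ]; push_cast; ring
    have f6 : ((m+a+2)! : ℚ) = (m+a+2) * (m+a+1)! := by
      rw [show m+a+2 = (m+a+1)+1 by omega, Nat.factorial_succ]; push_cast; ring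
    rw [f1, f2, f3, f4, f5, f6]
    have n1 : (a ! : ℚ) ≠ 0 := by positivity
    have n2 : (b ! : ℚ) ≠ 0 := by positivity
    have n3 : (m ! : ℚ) ≠ 0 := by positivity
    have n4 : ((a+b+1)! : ℚ) ≠ 0 := by positivity
    have n5 : ((m+a+b+2)! : ℚ) ≠ 0 := by positivity
    have n6 : ((m+a+1)! : ℚ) ≠ 0 := by positivity
    field_simp
    ring
  exact_mod_cast key

/-- Binomial identity used in the extraction of the 8-vertex correlation function:
`C(t-1-2k, j'-k)·C(t-1-k, k-1) + C(t-1-2k, j'-1-k)·C(t-k, k) = C(t-1-k, t-j'-k)·C(j', k)`,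
with the convention `C(n, -1) = 0` (handled by the `if k = 0` clause). -/
theorem stmt0 (t k j' : ℕ) (hk1 : k ≤ j' - 1) (hj : 1 ≤ j')
    (hk2 : k ≤ t - 1 - j') (hj2 : j' + 1 ≤ t) :
    (t - 1 - 2 * k).choose (j' - k) * (if k = 0 then 0 else (t - 1 - k).choose (k - 1))
      + (t - 1 - 2 * k).choose (j' - 1 - k) * (t - k).choose k
    = (t - 1 - k).choose (t - j' - k) * j'.choose k := by
  obtain ⟨a, ha⟩ : ∃ a, j' = k + 1 + a := ⟨j' - k - 1, by omega⟩
  obtain ⟨b, hb⟩ : ∃ b, t = 2*k + a + b + 2 := ⟨t - 1 - j' - k, by omega⟩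
  subst ha hb
  rcases Nat.eq_zero_or_pos k with hk | hk
  · subst hk
    rw [if_pos rfl, mul_zero, zero_add,
      show 2*0 + a + b + 2 - 1 - 2*0 = a + b + 1 by omega,
      show 0 + 1 + a - 1 - 0 = a by omega,
      show 2*0 + a + b + 2 - 0 = a + b + 2 by omega,
      show 2*0 + a + b + 2 - (0 + 1 + a) - 0 = b + 1 by omega,
      Nat.choose_zero_right, Nat.choose_zero_right, mul_one, mul_one,
      show b + 1 = (a+b+1) - a by omega, Nat.choose_symm (by omega)]
  · obtain ⟨m, rfl⟩ : ∃ m, k = m + 1 := ⟨k - 1, by omega⟩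
    rw [if_neg (by omega)]
    have h1 : 2*(m+1) + a + b + 2 - 1 - 2*(m+1) = a + b + 1 := by omega
    have h2 : m + 1 + 1 + a - (m+1) = a + 1 := by omega
    have h3 : 2*(m+1) + a + b + 2 - 1 - (m+1) = m + a + b + 2 := by omega
    have h4 : m + 1 - 1 = m := by omega
    have h5 : m + 1 + 1 + a - 1 - (m+1) = a := by omega
    have h6 : 2*(m+1) + a + b + 2 - (m+1) = m + a + b + 3 := by omega
    have h7 : 2*(m+1) + a + b + 2 - (m + 1 + 1 + a) - (m+1) = b + 1 := by omega
    rw [h1, h2, h3, h4, h5, h6, h7]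
    have := aux_fact a b m
    rw [show (m+a+b+2).choose m = (m+a+b+2).choose (a+b+2) by
      rw [show a+b+2 = (m+a+b+2) - m by omega]; exact (Nat.choose_symm (by omega)).symm] at this
    rw [show (m+a+b+2).choose (a+b+2) = (m+a+b+2).choose m by
      rw [show a+b+2 = (m+a+b+2) - m by omega]; exact Nat.choose_symm (by omega)] at this
    calc (a+b+1).choose (a+1) * (m+a+b+2).choose m
          + (a+b+1).choose a * (m+a+b+3).choose (m+1)
        = (m+a+b+2).choose (b+1) * (m+a+2).choose (m+1) := this
      _ = (m+a+b+2).choose (b+1) * (m+1+1+a).choose (m+1) := by ring_nf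
end

section
/- Let Δ, P, x be elements of a commutative ring and l a formal variable. The formal power series expansion in l of (1 + l(Δ + xD)) / (1 + Δ(1+x²)l + P x² l²) has coefficient of l^t equal to f(t) + (Δ + xD)·f(t-1), where f(t) = Σ_{k=0}^{⌊t/2⌋} C(t-k,k)·(-1)^{t-k}·Δ^{t-2k}·P^k·x^{2k}·(1+x²)^{t-2k} and f(-1)=0. -/
private def trm {R : Type*} [CommRing R] (Δ P x : R) (t k : ℕ) : R :=
  ((t - k).choose k : R) * (-1 : R) ^ (t - k) * Δ ^ (t - 2 * k) * P ^ k
    * x ^ (2 * k) * (1 + x ^ 2) ^ (t - 2 * k)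

private lemma trm_eq_zero {R : Type*} [CommRing R] (Δ P x : R) {t k : ℕ}
    (h : t / 2 < k) : trm Δ P x t k = 0 := by
  have : t - k < k := by omega
  simp [trm, Nat.choose_eq_zero_of_lt this]

private lemma fext {R : Type*} [CommRing R] {Δ P x : R} {f : ℕ → R}
    (hf : ∀ t : ℕ, f t = ∑ k ∈ Finset.range (t / 2 + 1), trm Δ P x t k)
    (t N : ℕ) (hN : t / 2 + 1 ≤ N) :
    f t = ∑ k ∈ Finset.range N, trm Δ P x t k := by
  rw [hf t]
  refine Finset.sum_subset (Finset.range_subset_range.2 hN) ?_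
  intro k hk hk'
  simp only [Finset.mem_range] at hk hk'
  exact trm_eq_zero Δ P x (by omega)

private lemma frec {R : Type*} [CommRing R] {Δ P x : R} {f : ℕ → R}
    (hf : ∀ t : ℕ, f t = ∑ k ∈ Finset.range (t / 2 + 1), trm Δ P x t k)
    (t : ℕ) :
    f (t + 2) = -(Δ * (1 + x ^ 2)) * f (t + 1) + -(P * x ^ 2) * f t := by
  have key : ∀ j, j ∈ Finset.range (t / 2 + 1) →
      trm Δ P x (t + 2) (j + 1)
        = -(Δ * (1 + x ^ 2)) * trm Δ P x (t + 1) (j + 1)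
          + -(P * x ^ 2) * trm Δ P x t j := by
    intro j hj
    simp only [Finset.mem_range] at hj
    have h2j : 2 * j ≤ t := by omega
    rcases le_or_gt (2 * j + 1) t with h | h
    · simp only [trm]
      rw [show t + 2 - (j + 1) = (t - j) + 1 from by omega,
        show t + 2 - 2 * (j + 1) = (t + 1 - 2 * (j + 1)) + 1 from by omega,
        show t + 1 - (j + 1) = t - j from by omega,
        show t - 2 * j = (t + 1 - 2 * (j + 1)) + 1 from by omega,
        show t - j = (t - j - 1) + 1 from by omega,
        Nat.choose_succ_succ]
      push_cast
      ring
    · have ht : t = 2 * j := by omega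
      subst ht
      simp only [trm]
      rw [show 2 * j + 2 - (j + 1) = j + 1 from by omega,
        show 2 * j + 2 - 2 * (j + 1) = 0 from by omega,
        show 2 * j + 1 - (j + 1) = j from by omega,
        show 2 * j - j = j from by omega,
        show 2 * j - 2 * j = 0 from by omega]
      simp [Nat.choose_self, Nat.choose_succ_self]
      ring
  have e2 : (t + 2) / 2 + 1 = t / 2 + 2 := by omega
  rw [hf (t + 2), e2, fext hf (t + 1) (t / 2 + 2) (by omega), hf t,
    Finset.sum_range_succ' _ (t / 2 + 1), Finset.sum_range_succ' _ (t / 2 + 1),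
    Finset.sum_congr rfl key]
  rw [Finset.sum_add_distrib, ← Finset.mul_sum, ← Finset.mul_sum]
  have h0 : trm Δ P x (t + 2) 0 = -(Δ * (1 + x ^ 2)) * trm Δ P x (t + 1) 0 := by
    simp only [trm]
    simp [pow_succ]
    ring
  rw [h0]
  ring



open PowerSeries in
/-- The formal power series expansion in `l` of
`(1 + l(Δ + xD)) / (1 + Δ(1+x²)l + P x² l²)` has coefficient of `l^t` equal to
`f(t) + (Δ + xD) f(t-1)`, where
`f(t) = Σ_{k=0}^{⌊t/2⌋} C(t-k,k) (−1)^{t-k} Δ^{t-2k} P^k x^{2k} (1+x²)^{t-2k}`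
and `f(-1) = 0`.  Since the denominator has constant coefficient `1`, this is
equivalent to the series of coefficients multiplied by the denominator being
equal to the numerator. -/
theorem stmt1 {R : Type*} [CommRing R] (Δ D P x : R) (f : ℕ → R)
    (hf : ∀ t : ℕ, f t = ∑ k ∈ Finset.range (t / 2 + 1),
      ((t - k).choose k : R) * (-1 : R) ^ (t - k) * Δ ^ (t - 2 * k) * P ^ k
        * x ^ (2 * k) * (1 + x ^ 2) ^ (t - 2 * k)) :
    (PowerSeries.mk fun t : ℕ =>
        f t + (Δ + x * D) * (if t = 0 then 0 else f (t - 1)))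
      * (1 + PowerSeries.C (Δ * (1 + x ^ 2)) * PowerSeries.X
          + PowerSeries.C (P * x ^ 2) * PowerSeries.X ^ 2)
    = 1 + PowerSeries.C (Δ + x * D) * PowerSeries.X := by
  have hf' : ∀ t : ℕ, f t = ∑ k ∈ Finset.range (t / 2 + 1), trm Δ P x t k := hf
  have f0 : f 0 = 1 := by rw [hf' 0]; simp [trm]
  have f1 : f 1 = -(Δ * (1 + x ^ 2)) := by
    rw [hf' 1]; simp [trm]
  set g : ℕ → R := fun t => f t + (Δ + x * D) * (if t = 0 then 0 else f (t - 1))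
    with hg
  have key : (PowerSeries.mk g)
      * (1 + PowerSeries.C (Δ * (1 + x ^ 2)) * PowerSeries.X
          + PowerSeries.C (P * x ^ 2) * PowerSeries.X ^ 2)
      = PowerSeries.mk g
        + PowerSeries.C (Δ * (1 + x ^ 2)) * (PowerSeries.mk g * PowerSeries.X)
        + PowerSeries.C (P * x ^ 2) * (PowerSeries.mk g * PowerSeries.X ^ 2) := by
    ring
  rw [key]
  have hco : ∀ (b : R) (n : ℕ), (PowerSeries.coeff n)
      (PowerSeries.C b * (PowerSeries.mk g * PowerSeries.X))
      = b * (if 1 ≤ n then g (n - 1) else 0) := by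
    intro b n
    rw [coeff_C_mul, ← pow_one (PowerSeries.X : PowerSeries R), coeff_mul_X_pow']
    simp
  have hco2 : ∀ (b : R) (n : ℕ), (PowerSeries.coeff n)
      (PowerSeries.C b * (PowerSeries.mk g * PowerSeries.X ^ 2))
      = b * (if 2 ≤ n then g (n - 2) else 0) := by
    intro b n
    rw [coeff_C_mul, coeff_mul_X_pow']
    simp
  ext n
  rw [map_add, map_add, map_add, hco, hco2, coeff_mk, coeff_C_mul, coeff_X,
    PowerSeries.coeff_one]
  rcases n with _ | _ | _ | n
  · simp [hg, f0]
  · simp [hg, f0, f1]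
  · have h2 := frec hf' 0
    simp only [hg]
    norm_num [f0, f1]
    linear_combination h2 - Δ*(1+x^2)*f1 - x^2*P*f0
  · have h1 := frec hf' (n + 1)
    have h2 := frec hf' n
    simp only [hg]
    have e1 : n + 1 + 1 + 1 - 2 = n + 1 := rfl
    have e2 : n + 1 + 1 + 1 - 1 = n + 2 := rfl
    rw [e1, e2]
    norm_num
    linear_combination h1 + (Δ + x * D) * h2
end

section
/- Let m ∈ (0, 1/2], and let T, T₁ be independent geometric random variables with success probability 2m (taking values in {1,2,...}). Then for any positive integer t, P(2T + T₁ ≤ t) ≥ 1 − (1−2m)^{⌊t/2⌋} + (1−2m)^{t−1} − (1−2m)^{t−⌊t/2⌋−1}. -/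
set_option maxHeartbeats 1000000


open MeasureTheory

/-- For `m ∈ (0,1/2]` and `T, T₁` independent geometric random variables with
success probability `2m` (values in `{1,2,…}`), for every `t ≥ 1`,
`P(2T + T₁ ≤ t) ≥ 1 − (1−2m)^⌊t/2⌋ + (1−2m)^{t−1} − (1−2m)^{t−⌊t/2⌋−1}`. -/
theorem stmt4 {Ω : Type*} [MeasurableSpace Ω] (μ : Measure Ω) [IsProbabilityMeasure μ]
    (m : ℝ) (hm0 : 0 < m) (hm1 : m ≤ 1 / 2)
    (T T₁ : Ω → ℕ)
    (hT : ∀ k : ℕ, 1 ≤ k → μ {ω | T ω = k} = ENNReal.ofReal (2*m * (1 - 2*m) ^ (k - 1)))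
    (hT0 : μ {ω | T ω = 0} = 0)
    (hT₁ : ∀ k : ℕ, 1 ≤ k → μ {ω | T₁ ω = k} = ENNReal.ofReal (2*m * (1 - 2*m) ^ (k - 1)))
    (hT₁0 : μ {ω | T₁ ω = 0} = 0)
    (hind : ∀ a b : ℕ, μ ({ω | T ω = a} ∩ {ω | T₁ ω = b})
      = μ {ω | T ω = a} * μ {ω | T₁ ω = b}) :
    ∀ t : ℕ, 1 ≤ t →
      (μ {ω | 2 * T ω + T₁ ω ≤ t}).toReal
        ≥ 1 - (1 - 2*m) ^ (t / 2) + (1 - 2*m) ^ (t - 1) - (1 - 2*m) ^ (t - t / 2 - 1) := by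
  intro t ht
  set q : ℝ := 1 - 2*m with hqdef
  have hq0 : 0 ≤ q := by rw [hqdef]; linarith
  have hq1 : q < 1 := by rw [hqdef]; linarith
  have hp : 2*m = 1 - q := by rw [hqdef]; ring
  set B : ℕ := t / 2 with hBdef
  have hB2 : 2 * B ≤ t := by omega
  have hBt : B ≤ t - 1 := by omega
  set c : ℝ := q ^ B + q ^ (t - B - 1) - q ^ (t - 1) with hcdef
  -- tail sum for T₁
  have tail : ∀ n : ℕ,
      (∑' b : ℕ, if n < b then μ {ω | T₁ ω = b} else 0) = ENNReal.ofReal (q ^ n) := by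
    intro n
    have hterm : ∀ b : ℕ, (if n < b then μ {ω | T₁ ω = b} else 0)
        = ENNReal.ofReal (if n < b then 2*m * q ^ (b - 1) else 0) := by
      intro b
      by_cases h : n < b
      · simp only [h, if_true]
        exact hT₁ b (by omega)
      · simp [h]
    rw [tsum_congr hterm]
    have hnn : ∀ b : ℕ, 0 ≤ (if n < b then 2*m * q ^ (b - 1) else 0) := by
      intro b; split <;> positivity
    have hsumm : Summable (fun b : ℕ => if n < b then 2*m * q ^ (b - 1) else 0) := by
      apply (summable_nat_add_iff (f := fun b : ℕ => if n < b then 2*m * q ^ (b - 1) else 0) 1).mp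
      refine Summable.of_nonneg_of_le ?_ ?_ ((summable_geometric_of_lt_one hq0 hq1).mul_left (2*m))
      · intro i; split <;> positivity
      · intro i
        simp only [Nat.add_sub_cancel]
        split
        · exact le_refl _
        · positivity
    rw [← ENNReal.ofReal_tsum_of_nonneg hnn hsumm]
    congr 1
    have := Summable.sum_add_tsum_nat_add (f := fun b : ℕ => if n < b then 2*m * q ^ (b - 1) else 0)
      (n + 1) hsumm
    rw [← this]
    have h1 : ∀ x ∈ Finset.range (n+1), (if n < x then 2*m * q ^ (x - 1) else 0) = 0 := by
      intro x hx
      rw [Finset.mem_range] at hx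
      simp [Nat.not_lt.mpr (by omega : x ≤ n)]
    rw [Finset.sum_congr rfl h1, Finset.sum_const_zero, zero_add]
    have h2 : ∀ i : ℕ, (if n < i + (n+1) then 2*m * q ^ (i + (n+1) - 1) else 0)
        = (2*m * q ^ n) * q ^ i := by
      intro i
      rw [if_pos (by omega)]
      have : i + (n+1) - 1 = n + i := by omega
      rw [this, pow_add]; ring
    rw [tsum_congr h2, tsum_mul_left, tsum_geometric_of_lt_one hq0 hq1]
    rw [hp, mul_comm, inv_mul_cancel_left₀ (by linarith : (1:ℝ) - q ≠ 0)]
  -- covering bound for the complement event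
  set S := {ω | 2 * T ω + T₁ ω ≤ t} with hSdef
  have hcover : Sᶜ ⊆ ⋃ x : ℕ × ℕ,
      (if t < 2*x.1 + x.2 then ({ω | T ω = x.1} ∩ {ω | T₁ ω = x.2}) else ∅) := by
    intro ω hω
    simp only [hSdef, Set.mem_compl_iff, Set.mem_setOf_eq, not_le] at hω
    refine Set.mem_iUnion.mpr ⟨(T ω, T₁ ω), ?_⟩
    rw [if_pos hω]
    exact ⟨rfl, rfl⟩
  have hSc : μ Sᶜ ≤ ∑' x : ℕ × ℕ,
      (if t < 2*x.1 + x.2 then μ {ω | T ω = x.1} * μ {ω | T₁ ω = x.2} else 0) := by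
    refine le_trans (measure_mono hcover) (le_trans (measure_iUnion_le _) ?_)
    refine ENNReal.tsum_le_tsum (fun x => ?_)
    by_cases h : t < 2*x.1 + x.2
    · rw [if_pos h, if_pos h, hind]
    · rw [if_neg h, if_neg h, measure_empty]
  -- compute the covering sum
  set fr : ℕ → ℝ := fun a => if 1 ≤ a then 2*m * q^(a-1) * q^(t - 2*a) else 0 with hfrdef
  have hfrnn : ∀ a, 0 ≤ fr a := by
    intro a; rw [hfrdef]; dsimp only; split <;> positivity
  have hfrsum : Summable fr := by
    apply (summable_nat_add_iff (f := fr) 1).mp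
    refine Summable.of_nonneg_of_le (fun i => hfrnn _) ?_
      ((summable_geometric_of_lt_one hq0 hq1).mul_left (2*m))
    intro i
    rw [hfrdef]
    dsimp only
    rw [if_pos (by omega), Nat.add_sub_cancel]
    have h1 : q ^ (t - 2*(i+1)) ≤ 1 := pow_le_one₀ hq0 hq1.le
    have h2 : (0:ℝ) ≤ 2*m * q^i := by positivity
    calc 2*m * q^i * q^(t - 2*(i+1)) ≤ 2*m * q^i * 1 := by
          exact mul_le_mul_of_nonneg_left h1 h2
      _ = 2*m * q^i := by ring
  have hC : (∑' x : ℕ × ℕ,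
      (if t < 2*x.1 + x.2 then μ {ω | T ω = x.1} * μ {ω | T₁ ω = x.2} else 0))
      = ENNReal.ofReal (∑' a, fr a) := by
    refine (ENNReal.tsum_prod (f := fun a b : ℕ =>
      if t < 2*a + b then μ {ω | T ω = a} * μ {ω | T₁ ω = b} else 0)).trans ?_
    have inner : ∀ a : ℕ,
        (∑' b : ℕ, if t < 2*a + b then μ {ω | T ω = a} * μ {ω | T₁ ω = b} else 0)
        = ENNReal.ofReal (fr a) := by
      intro a
      have hstep : ∀ b : ℕ, (if t < 2*a + b then μ {ω | T ω = a} * μ {ω | T₁ ω = b} else 0)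
          = μ {ω | T ω = a} * (if t - 2*a < b then μ {ω | T₁ ω = b} else 0) := by
        intro b
        by_cases h : t < 2*a + b
        · rw [if_pos h]
          by_cases h2 : t - 2*a < b
          · rw [if_pos h2]
          · have hb : b = 0 := by omega
            rw [if_neg h2, hb, hT₁0, mul_zero]
        · rw [if_neg h, if_neg (by omega), mul_zero]
      rw [tsum_congr hstep, ENNReal.tsum_mul_left, tail (t - 2*a)]
      rcases Nat.eq_zero_or_pos a with ha | ha
      · rw [ha, hT0, zero_mul, hfrdef]
        simp
      · rw [hT a ha, ← ENNReal.ofReal_mul (by positivity), hfrdef]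
        dsimp only
        rw [if_pos (by omega : 1 ≤ a)]
    exact tsum_congr inner ▸ (ENNReal.ofReal_tsum_of_nonneg hfrnn hfrsum).symm ▸ rfl
  -- evaluate the real series
  have hfin : ∀ k : ℕ, 2*k ≤ t → (∑ a ∈ Finset.range (k+1), fr a) = q^(t-1-k) - q^(t-1) := by
    intro k
    induction k with
    | zero =>
      intro _
      simp [hfrdef]
    | succ k ih =>
      intro hk
      rw [Finset.sum_range_succ, ih (by omega)]
      have h1 : fr (k+1) = 2*m * q^k * q^(t - 2*(k+1)) := by
        rw [hfrdef]; dsimp only; rw [if_pos (by omega), Nat.add_sub_cancel]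
      have he1 : t - 2*(k+1) = t - k - 2 - k := by omega
      have he2 : q^(t-1-k) = q^(t-k-2) * q := by
        rw [← pow_succ]; congr 1; omega
      have he3 : q^k * q^(t-2*(k+1)) = q^(t-k-2) := by
        rw [← pow_add]; congr 1; omega
      have he4 : t - 1 - (k+1) = t - k - 2 := by omega
      rw [h1, he4, hp]
      nlinarith [he2, he3]
  have htail2 : (∑' i : ℕ, fr (i + (B+1))) = q^B := by
    have h2 : ∀ i : ℕ, fr (i + (B+1)) = (2*m * q^B) * q^i := by
      intro i
      rw [hfrdef]; dsimp only
      rw [if_pos (by omega), (by omega : t - 2*(i + (B+1)) = 0), pow_zero,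
        (by omega : i + (B+1) - 1 = B + i), pow_add]
      ring
    rw [tsum_congr h2, tsum_mul_left, tsum_geometric_of_lt_one hq0 hq1]
    rw [hp, mul_comm, inv_mul_cancel_left₀ (by linarith : (1:ℝ) - q ≠ 0)]
  have hfr_tsum : (∑' a, fr a) = c := by
    rw [← Summable.sum_add_tsum_nat_add (B+1) hfrsum, hfin B hB2, htail2, hcdef,
      (by omega : t - 1 - B = t - B - 1)]
    ring
  -- c is in the right range
  have hc0 : 0 ≤ c := by
    have hx1 : q^(t-1) ≤ q^(t-B-1) := pow_le_pow_of_le_one hq0 hq1.le (by omega)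
    have hx2 : (0:ℝ) ≤ q^B := by positivity
    rw [hcdef]; linarith
  -- assemble
  have htotal : (1 : ENNReal) ≤ μ S + ENNReal.ofReal c := by
    have h0 := measure_union_le (μ := μ) S Sᶜ
    rw [Set.union_compl_self, measure_univ] at h0
    refine le_trans h0 ?_
    gcongr
    rw [← hfr_tsum]
    exact hSc.trans (le_of_eq hC)
  have hrhs : 1 - q ^ B + q ^ (t-1) - q ^ (t - B - 1) = 1 - c := by
    rw [hcdef]; ring
  rw [ge_iff_le, hrhs]
  rcases le_or_gt 1 c with hc1 | hc1
  · have : (0:ℝ) ≤ (μ S).toReal := ENNReal.toReal_nonneg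
    linarith
  · have h2 : ENNReal.ofReal (1 - c) ≤ μ S := by
      rw [ENNReal.ofReal_sub _ hc0, ENNReal.ofReal_one]
      exact tsub_le_iff_right.mpr htotal
    have h3 := ENNReal.toReal_mono (measure_ne_top μ S) h2
    rwa [ENNReal.toReal_ofReal (by linarith)] at h3
end

section
/- Let E be a finite set, T a transition kernel from E³ to E with all entries positive, and D, U stochastic matrices on E. The (D,U)-horizontal-zigzag Markov chain distribution is invariant under the triangular PCA with kernel T if and only if for all y, y', z ∈ E: D(y,z)·U(z,y') = Σ_{x ∈ E} U(y,x)·D(x,y')·T(y,x,y'; z). -/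
open Finset

lemma window_sum {E : Type*} [Fintype E] [DecidableEq E]
    (T : E → E → E → E → ℝ) (D U : E → E → ℝ)
    (hUstoch : ∀ i, ∑ j, U i j = 1)
    (ρ : E → ℝ) (n : ℕ) (b : Fin (n + 1) → E) (c : Fin n → E) :
    ∑ a : Fin (n + 2) → E,
        ρ (a 0)
          * (∏ i : Fin (n + 1), D (a i.castSucc) (b i) * U (b i) (a i.succ))
          * (∏ i : Fin n, T (b i.castSucc) (a i.succ.castSucc) (b i.succ) (c i))
      = (∑ e, ρ e * D e (b 0))
          * ∏ i : Fin n, (∑ x, U (b i.castSucc) x * D x (b i.succ)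
              * T (b i.castSucc) x (b i.succ) (c i)) := by
  set h : Fin (n + 2) → E → ℝ :=
    Fin.cases (fun e => ρ e * D e (b 0))
      (fun j => Fin.lastCases (fun e => U (b (Fin.last n)) e)
        (fun i e => U (b i.castSucc) e * D e (b i.succ) * T (b i.castSucc) e (b i.succ) (c i)) j)
    with hh
  have key : ∀ a : Fin (n + 2) → E,
      ρ (a 0)
        * (∏ i : Fin (n + 1), D (a i.castSucc) (b i) * U (b i) (a i.succ))
        * (∏ i : Fin n, T (b i.castSucc) (a i.succ.castSucc) (b i.succ) (c i))
      = ∏ j : Fin (n + 2), h j (a j) := by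
    intro a
    have hDU : (∏ i : Fin (n + 1), D (a i.castSucc) (b i) * U (b i) (a i.succ))
        = D (a 0) (b 0) * U (b (Fin.last n)) (a (Fin.last n).succ)
          * ∏ i : Fin n, (D (a i.succ.castSucc) (b i.succ) * U (b i.castSucc) (a i.succ.castSucc)) := by
      rw [Finset.prod_mul_distrib,
        Fin.prod_univ_succ (f := fun i : Fin (n + 1) => D (a i.castSucc) (b i)),
        Fin.prod_univ_castSucc (f := fun i : Fin (n + 1) => U (b i) (a i.succ)),
        Finset.prod_mul_distrib]
      simp only [Fin.castSucc_zero, Fin.succ_castSucc]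
      ring
    have hH : ∏ j : Fin (n + 2), h j (a j)
        = (ρ (a 0) * D (a 0) (b 0))
          * (∏ i : Fin n, U (b i.castSucc) (a i.succ.castSucc) * D (a i.succ.castSucc) (b i.succ)
              * T (b i.castSucc) (a i.succ.castSucc) (b i.succ) (c i))
          * U (b (Fin.last n)) (a (Fin.last n).succ) := by
      rw [Fin.prod_univ_succ (f := fun j : Fin (n + 2) => h j (a j)),
        Fin.prod_univ_castSucc (f := fun j : Fin (n + 1) => h j.succ (a j.succ))]
      simp only [hh, Fin.cases_zero, Fin.cases_succ, Fin.lastCases_castSucc, Fin.lastCases_last]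
      simp only [Fin.succ_castSucc]
      ring
    rw [hDU, hH, Finset.prod_mul_distrib, Finset.prod_mul_distrib, Finset.prod_mul_distrib]
    ring
  simp only [key]
  rw [← Fintype.prod_sum]
  rw [Fin.prod_univ_succ (f := fun j : Fin (n + 2) => ∑ e, h j e),
    Fin.prod_univ_castSucc (f := fun j : Fin (n + 1) => ∑ e, h j.succ e)]
  simp only [hh, Fin.cases_zero, Fin.cases_succ, Fin.lastCases_castSucc, Fin.lastCases_last]
  rw [hUstoch]
  ring

/-- Finite-window form of the invariance criterion for triangular PCA
(Lemma "inv" of the paper): for a positive kernel `T` and stochastic matrices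
`D, U`, the `(D,U)`-horizontal-zigzag Markov chain distribution is invariant
under the TPCA with kernel `T` — i.e. for every initial probability vector `ρ`
and every finite window, transporting the HZMC density of the pair of lines
`(a, b)` through the TPCA yields the HZMC density of the new pair of lines
`(b, c)` (whose initial vector is the marginal `Σ_e ρ e · D(e; b₀)`) — if and
only if `D(y;z)·U(z;y') = Σ_x U(y;x)·D(x;y')·T(y,x,y';z)` for all `y, y', z`. -/
theorem stmt9 {E : Type*} [Fintype E] [DecidableEq E] [Nonempty E]
    (T : E → E → E → E → ℝ)
    (hTpos : ∀ y x y' z, 0 < T y x y' z)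
    (hTstoch : ∀ y x y', ∑ z, T y x y' z = 1)
    (D U : E → E → ℝ)
    (hDnonneg : ∀ i j, 0 ≤ D i j) (hUnonneg : ∀ i j, 0 ≤ U i j)
    (hDstoch : ∀ i, ∑ j, D i j = 1) (hUstoch : ∀ i, ∑ j, U i j = 1) :
    (∀ (ρ : E → ℝ), (∀ e, 0 ≤ ρ e) → (∑ e, ρ e = 1) →
      ∀ (n : ℕ) (b : Fin (n + 1) → E) (c : Fin n → E),
        ∑ a : Fin (n + 2) → E,
          ρ (a 0)
            * (∏ i : Fin (n + 1), D (a i.castSucc) (b i) * U (b i) (a i.succ))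
            * (∏ i : Fin n, T (b i.castSucc) (a i.succ.castSucc) (b i.succ) (c i))
        = (∑ e, ρ e * D e (b 0))
            * ∏ i : Fin n, D (b i.castSucc) (c i) * U (c i) (b i.succ))
    ↔ (∀ y y' z : E, D y z * U z y' = ∑ x, U y x * D x y' * T y x y' z) := by
  constructor
  · intro H
    -- Step 1: for every e, y, y', z we get a cancelled identity
    have step1 : ∀ e y y' z : E,
        D e y * (∑ x, U y x * D x y' * T y x y' z) = D e y * (D y z * U z y') := by
      intro e y y' z
      have hρpos : ∀ e', (0:ℝ) ≤ (if e' = e then (1:ℝ) else 0) := by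
        intro e'; split <;> norm_num
      have hρsum : ∑ e', (if e' = e then (1:ℝ) else 0) = 1 := by simp
      have := H (fun e' => if e' = e then 1 else 0) hρpos hρsum 1 ![y, y'] ![z]
      rw [window_sum T D U hUstoch (fun e' => if e' = e then 1 else 0) 1 ![y, y'] ![z]] at this
      simpa [Fin.prod_univ_one, Fin.sum_univ_succ, mul_comm] using this
    -- membership in the "support" set gives the identity
    have hS : ∀ y : E, (∃ e, 0 < D e y) →
        ∀ y' z, (∑ x, U y x * D x y' * T y x y' z) = D y z * U z y' := by
      rintro y ⟨e, he⟩ y' z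
      have := step1 e y y' z
      exact mul_left_cancel₀ (ne_of_gt he) this
    -- support rows of D are strictly positive
    have hrow : ∀ y : E, (∃ e, 0 < D e y) → ∀ z, 0 < D y z := by
      intro y hy z
      -- find x0, y'0 with U y x0 * D x0 y'0 > 0
      have hsum1 : ∑ y'0, ∑ x, U y x * D x y'0 = 1 := by
        rw [Finset.sum_comm]
        have : ∀ x, ∑ y'0, U y x * D x y'0 = U y x := by
          intro x; rw [← Finset.mul_sum, hDstoch, mul_one]
        simp only [this, hUstoch]
      have hex : ∃ y'0 x0, 0 < U y x0 * D x0 y'0 := by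
        by_contra hcon
        push_neg at hcon
        have : ∑ y'0, ∑ x, U y x * D x y'0 ≤ 0 := by
          apply Finset.sum_nonpos; intro y'0 _
          apply Finset.sum_nonpos; intro x _
          exact hcon y'0 x
        linarith [hsum1 ▸ this]
      obtain ⟨y'0, x0, hx0⟩ := hex
      have hFpos : 0 < ∑ x, U y x * D x y'0 * T y x y'0 z := by
        apply Finset.sum_pos'
        · intro x _
          exact mul_nonneg (mul_nonneg (hUnonneg _ _) (hDnonneg _ _)) (le_of_lt (hTpos _ _ _ _))
        · exact ⟨x0, Finset.mem_univ _, mul_pos hx0 (hTpos _ _ _ _)⟩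
      rw [hS y hy y'0 z] at hFpos
      by_contra hz
      push_neg at hz
      have : D y z = 0 := le_antisymm hz (hDnonneg _ _)
      rw [this, zero_mul] at hFpos
      exact lt_irrefl _ hFpos
    -- a base point in the support
    obtain ⟨e0⟩ := ‹Nonempty E›
    have hbase : ∃ y0, ∃ e, 0 < D e y0 := by
      by_contra hcon
      push_neg at hcon
      have : ∑ j, D e0 j ≤ 0 := by
        apply Finset.sum_nonpos; intro j _
        exact le_of_not_gt fun hp => absurd hp (by simpa using hcon j e0)
      linarith [hDstoch e0]
    obtain ⟨y0, hy0⟩ := hbase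
    intro y y' z
    exact (hS y ⟨y0, hrow y0 hy0 y⟩ y' z).symm
  · intro hid ρ hρ0 hρ1 n b c
    rw [window_sum T D U hUstoch]
    congr 1
    apply Finset.prod_congr rfl
    intro i _
    exact (hid (b i.castSucc) (b i.succ) (c i)).symm
end

section
/- Let E = {0,1} and let D, U be stochastic 2×2 matrices with positive entries satisfying DU = UD. Define T^S(y,y';x) = D(y;x)U(x;y')/(DU)(y;y') and T^R(y,y';x) = U(y;x)D(x;y')/(DU)(y;y'). Then T^S(y,y';x) = T^R(y',y;x) for all y, y', x ∈ {0,1}. -/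
/-- For `E = {0,1}` and positive row-stochastic matrices `D, U` with `DU = UD`,
the kernels `T^S(y,y';x) = D(y;x)U(x;y')/(DU)(y;y')` and
`T^R(y,y';x) = U(y;x)D(x;y')/(DU)(y;y')` satisfy `T^S(y,y';x) = T^R(y',y;x)`. -/
theorem stmt10 (D U : Fin 2 → Fin 2 → ℝ)
    (hDpos : ∀ i j, 0 < D i j) (hUpos : ∀ i j, 0 < U i j)
    (hDstoch : ∀ i, ∑ j, D i j = 1) (hUstoch : ∀ i, ∑ j, U i j = 1)
    (hcomm : ∀ i j, ∑ k, D i k * U k j = ∑ k, U i k * D k j) :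
    ∀ y y' x : Fin 2,
      D y x * U x y' / (∑ k, D y k * U k y')
        = U y' x * D x y / (∑ k, D y' k * U k y) := by
  intro y y' x
  have key : D 0 1 * U 1 0 = U 0 1 * D 1 0 := by
    have h := hcomm 0 0
    simp [Fin.sum_univ_two] at h
    linear_combination h
  have hd1 : (0:ℝ) < ∑ k, D y k * U k y' :=
    Finset.sum_pos (fun k _ => mul_pos (hDpos _ _) (hUpos _ _)) Finset.univ_nonempty
  have hd2 : (0:ℝ) < ∑ k, D y' k * U k y :=
    Finset.sum_pos (fun k _ => mul_pos (hDpos _ _) (hUpos _ _)) Finset.univ_nonempty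
  rw [div_eq_div_iff (ne_of_gt hd1) (ne_of_gt hd2)]
  rw [hcomm y' y]
  fin_cases y <;> fin_cases y' <;> fin_cases x <;>
    simp only [Fin.sum_univ_two, Fin.isValue, Fin.mk_one, Fin.mk_zero, Fin.zero_eta] <;>
    first
      | linear_combination (D 0 0 * U 0 0) * key
      | linear_combination (-(D 0 0 * U 0 0)) * key
      | linear_combination (D 0 0 * U 1 1) * key
      | linear_combination (-(D 0 0 * U 1 1)) * key
      | linear_combination (U 0 0 * D 1 1) * key
      | linear_combination (-(U 0 0 * D 1 1)) * key
      | linear_combination (D 1 1 * U 1 1) * key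
      | linear_combination (-(D 1 1 * U 1 1)) * key
end

section
/- Let p ∈ [0,1], r = 0, and let (X_t) be the Markov chain on ℤ × {0,1} with X_0 = (0,1) and transitions: from (i,k) at time t, go to (i,k) with probability r = 0, to (i+(−1)^{i+t}, 1−k) with probability 1−p−r = 1−p, and to (i, 1−k) with probability p. Then for every t ∈ ℕ, the first coordinate of X_{2t} has the same distribution as Y_t and its second coordinate equals 1 almost surely, where Y is the Markov chain on ℤ with Y_0 = 0 and increments −1, 0, +1, 2(−1)^{Y_t} with probabilities p(1−p), p², p(1−p), (1−p)² respectively. -/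
lemma stmt14_pow (n : ℤ) : (-1:ℝ)^n.natAbs = 0 → False := by
  rcases Int.even_or_odd n with h|h <;> simp

lemma stmt14_npow (n : ℤ) : ((-1:ℤ)^n.natAbs) = if Even n then 1 else -1 := by
  rcases Int.even_or_odd n with h|h
  · rw [if_pos h, (Int.natAbs_even.mpr h).neg_one_pow]
  · rw [if_neg (Int.not_even_iff_odd.mpr h), (Int.natAbs_odd.mpr h).neg_one_pow]

lemma stmt14_nadd (i j : ℤ) :
    ((-1:ℤ)^(i+j).natAbs) = (-1)^i.natAbs * (-1)^j.natAbs := by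
  rw [stmt14_npow, stmt14_npow, stmt14_npow]
  by_cases hi : Even i <;> by_cases hj : Even j <;>
    simp [Int.even_add, hi, hj]

lemma stmt14_flip1 (i : ℤ) : ((-1:ℤ)^(i+1).natAbs) = -(-1)^i.natAbs := by
  rw [stmt14_nadd, stmt14_npow (1:ℤ)]; norm_num

lemma stmt14_flip2 (i : ℤ) : ((-1:ℤ)^(i-1).natAbs) = -(-1)^i.natAbs := by
  rw [show i - 1 = i + (-1) by ring, stmt14_nadd, stmt14_npow (-1:ℤ)]
  norm_num

/-- With `r = 0`, two steps of the (time-inhomogeneous) chain `X` on `ℤ × {0,1}`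
starting from `(0,1)` reproduce the chain `Y`: the first coordinate of `X_{2t}`
is distributed as `Y_t` and its second coordinate is `1` a.s.  Expressed through
the time-`t` distributions `f` of `X` and `g` of `Y`. -/
theorem stmt14 (p : ℝ) (hp0 : 0 ≤ p) (hp1 : p ≤ 1)
    (f : ℕ → ℤ × Fin 2 → ℝ) (g : ℕ → ℤ → ℝ)
    (hf0 : ∀ s : ℤ × Fin 2, f 0 s = if s = ((0 : ℤ), (1 : Fin 2)) then 1 else 0)
    (hfrec : ∀ (t : ℕ) (i : ℤ) (k : Fin 2),
      f (t + 1) (i, k)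
        = p * f t (i, 1 - k)
          + (1 - p) * f t (i + (-1 : ℤ) ^ (i + t).natAbs, 1 - k))
    (hg0 : ∀ i : ℤ, g 0 i = if i = 0 then 1 else 0)
    (hgrec : ∀ (t : ℕ) (i : ℤ),
      g (t + 1) i
        = p * (1 - p) * (g t (i - 1) + g t (i + 1)) + p ^ 2 * g t i
          + (1 - p) ^ 2 * g t (i - 2 * (-1 : ℤ) ^ i.natAbs)) :
    ∀ (t : ℕ) (i : ℤ), f (2 * t) (i, 1) = g t i ∧ f (2 * t) (i, 0) = 0 := by
  intro t
  induction t with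
  | zero =>
    intro i
    constructor
    · rw [hf0, hg0]
      by_cases h : i = 0 <;> simp [h, Prod.ext_iff]
    · rw [hf0]
      simp [Prod.ext_iff]
  | succ t ih =>
    -- even-step parity: (-1)^(j + 2t) = (-1)^j
    have heven : ∀ j : ℤ, ((-1:ℤ)^(j + (2*t : ℕ)).natAbs) = (-1)^j.natAbs := by
      intro j
      rw [stmt14_nadd, stmt14_npow (2*t : ℕ)]
      simp [Int.even_coe_nat]
    have hodd : ∀ j : ℤ, ((-1:ℤ)^(j + (2*t+1 : ℕ)).natAbs) = -(-1)^j.natAbs := by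
      intro j
      push_cast
      rw [show j + (2*(t:ℤ)+1) = j + 2*(t:ℤ) + 1 by ring, stmt14_nadd, stmt14_npow (1:ℤ)]
      rw [show j + 2*(t:ℤ) = j + (2*t:ℕ) by push_cast; ring, heven]
      simp [Int.even_add_one]
    have h1 : ∀ j : ℤ, f (2*t+1) (j, 1) = 0 := by
      intro j
      have hr := hfrec (2*t) j 1
      rw [show (1 - 1 : Fin 2) = 0 by decide] at hr
      rw [hr, (ih j).2, (ih _).2]; ring
    have h0 : ∀ j : ℤ, f (2*t+1) (j, 0)
        = p * g t j + (1-p) * g t (j + (-1:ℤ)^j.natAbs) := by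
      intro j
      have hr := hfrec (2*t) j 0
      rw [show (1 - 0 : Fin 2) = 1 by decide, heven] at hr
      rw [hr, (ih j).1, (ih _).1]
    intro i
    set ε : ℤ := (-1:ℤ)^i.natAbs with hεdef
    have hε : ε = 1 ∨ ε = -1 := by
      rw [hεdef, stmt14_npow]; split_ifs <;> simp
    have key : ∀ j : ℤ, j = i + ε ∨ j = i - ε → ((-1:ℤ)^j.natAbs) = -ε := by
      intro j hj
      rcases hε with h|h <;> rcases hj with rfl|rfl <;> rw [h] <;>
        simp only [show i + (1:ℤ) = i + 1 by ring, show i - (1:ℤ) = i - 1 by ring,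
          show i + (-1:ℤ) = i - 1 by ring, show i - (-1:ℤ) = i + 1 by ring,
          stmt14_flip1, stmt14_flip2, ← hεdef, h]
    have step : f (2*(t+1)) (i, 1) = g (t+1) i ∧ f (2*(t+1)) (i, 0) = 0 := by
      have e2 : 2*(t+1) = (2*t+1) + 1 := by ring
      constructor
      · have hr := hfrec (2*t+1) i 1
        rw [show (1 - 1 : Fin 2) = 0 by decide, hodd] at hr
        rw [e2, hr, h0, h0]
        have hne : i + -ε = i - ε := by ring
        rw [hne]
        rw [key (i - ε) (Or.inr rfl)]
        have hne2 : i - ε + -ε = i - 2*ε := by ring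
        rw [hne2, hgrec]
        rw [← hεdef]
        rcases hε with h|h <;> rw [h] <;> norm_num <;> ring
      · have hr := hfrec (2*t+1) i 0
        rw [show (1 - 0 : Fin 2) = 1 by decide] at hr
        rw [e2, hr, h1, h1]; ring
    exact step
end
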